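/- Suppose the factor graph admits a valid solution x*, the priors satisfy the sufficient initialization for x*, and for some n ≥ 0 the variable-to-factor messages satisfy m^{(n)}_{v→J}(x*_v) > m^{(n)}_{v→J}(1 − x*_v) for every v ∈ V and every J ∈ 𝒥_v. Then the marginals at the next iteration satisfy r^{(n+1)}_v(x*_v) > r^{(n+1)}_v(1 − x*_v) for every v ∈ V. -/

import Mathlib

open Finset

/-- A factor graph: finite variable index set `V`, finite factor index set `𝒥`,
a nonempty neighborhood `nbhd J ⊆ V` for each factor `J`, every variable belonging
to at least one factor, and a `{0,1}`-valued factor function `g J` on `{0,1}^{V_J}`. -/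
structure FactorGraph (V 𝒥 : Type) [Fintype V] [DecidableEq V] [Fintype 𝒥] [DecidableEq 𝒥] where
  nbhd : 𝒥 → Finset V
  nbhd_nonempty : ∀ J : 𝒥, (nbhd J).Nonempty
  facs_nonempty : ∀ v : V, ∃ J : 𝒥, v ∈ nbhd J
  g : (J : 𝒥) → ({y // y ∈ nbhd J} → Bool) → Bool

variable {V 𝒥 : Type} [Fintype V] [DecidableEq V] [Fintype 𝒥] [DecidableEq 𝒥]

/-- `𝒥_v`: the set of factors adjacent to variable `v`. -/
def FactorGraph.Jset (FG : FactorGraph V 𝒥) (v : V) : Finset 𝒥 :=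
  univ.filter fun J => v ∈ FG.nbhd J

/-- Restriction of a global assignment to the neighborhood of factor `J`. -/
def FactorGraph.restrict (FG : FactorGraph V 𝒥) (x : V → Bool) (J : 𝒥) :
    {y // y ∈ FG.nbhd J} → Bool :=
  fun y => x y.1

/-- `x` is a valid solution if every factor evaluates to `1` on it. -/
def FactorGraph.ValidSolution (FG : FactorGraph V 𝒥) (x : V → Bool) : Prop :=
  ∀ J : 𝒥, FG.g J (FG.restrict x J) = true

/-- `κ_v = max_{J ∈ 𝒥_v} |{z ∈ {0,1}^{V_J} : g_J(z) = 1}|`. -/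
def FactorGraph.kappa (FG : FactorGraph V 𝒥) (v : V) : ℕ :=
  (FG.Jset v).sup fun J =>
    ((univ : Finset ({y // y ∈ FG.nbhd J} → Bool)).filter fun z => FG.g J z = true).card

/-- `ε_v = 1 / (1 + κ_v ^ |𝒥_v|)`. -/
noncomputable def FactorGraph.eps (FG : FactorGraph V 𝒥) (v : V) : ℝ :=
  1 / (1 + (FG.kappa v : ℝ) ^ (FG.Jset v).card)

/-- Priors: `P_v(0) = q_v`, `P_v(1) = 1 - q_v`. -/
def prior (q : V → ℝ) (v : V) (x : Bool) : ℝ :=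
  if x then 1 - q v else q v

/-- A run of loopy belief propagation on the factor graph `FG` with priors `q`:
messages `mVF` (variable-to-factor) and `mFV` (factor-to-variable) in `[0,1]`,
positive normalization constants, initialization by the priors, the sum-product
update rules, and per-message normalization. -/
structure BPRun (FG : FactorGraph V 𝒥) (q : V → ℝ) where
  q_mem : ∀ v : V, q v ∈ Set.Icc (0 : ℝ) 1
  mVF : ℕ → V → 𝒥 → Bool → ℝ
  mFV : ℕ → 𝒥 → V → Bool → ℝ
  CFV : ℕ → 𝒥 → V → ℝ
  CVF : ℕ → V → 𝒥 → ℝ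
  CFV_pos : ∀ n J v, v ∈ FG.nbhd J → 0 < CFV n J v
  CVF_pos : ∀ n v J, v ∈ FG.nbhd J → 0 < CVF n v J
  mVF_mem : ∀ n v J x, v ∈ FG.nbhd J → mVF n v J x ∈ Set.Icc (0 : ℝ) 1
  mFV_mem : ∀ n J v x, v ∈ FG.nbhd J → mFV n J v x ∈ Set.Icc (0 : ℝ) 1
  mVF_init : ∀ v J, v ∈ FG.nbhd J →
    mVF 0 v J false = q v ∧ mVF 0 v J true = 1 - q v
  mFV_eq : ∀ n : ℕ, ∀ J v, ∀ hv : v ∈ FG.nbhd J, ∀ x : Bool,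
    mFV (n + 1) J v x = CFV (n + 1) J v *
      ∑ z : {y // y ∈ FG.nbhd J} → Bool,
        (if z ⟨v, hv⟩ = x ∧ FG.g J z = true then
          ∏ y ∈ ((FG.nbhd J).erase v).attach,
            mVF n y.1 J (z ⟨y.1, Finset.mem_of_mem_erase y.2⟩)
        else 0)
  mVF_eq : ∀ n : ℕ, ∀ v J, v ∈ FG.nbhd J → ∀ x : Bool,
    mVF (n + 1) v J x = CVF (n + 1) v J * prior q v x *
      ∏ I ∈ (FG.Jset v).erase J, mFV (n + 1) I v x
  mVF_norm : ∀ n v J, v ∈ FG.nbhd J → mVF n v J false + mVF n v J true = 1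
  mFV_norm : ∀ n J v, v ∈ FG.nbhd J →
    mFV (n + 1) J v false + mFV (n + 1) J v true = 1

/-- Marginals: `r^{(n)}_v(x) = P_v(x) · ∏_{J ∈ 𝒥_v} m^{(n)}_{J→v}(x)`. -/
noncomputable def marginal (FG : FactorGraph V 𝒥) {q : V → ℝ} (R : BPRun FG q)
    (n : ℕ) (v : V) (x : Bool) : ℝ :=
  prior q v x * ∏ J ∈ FG.Jset v, R.mFV n J v x

/-- The priors satisfy the sufficient initialization for `x`:
`q_v > 1 - ε_v` if `x_v = 0` and `q_v < ε_v` if `x_v = 1`. -/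
def SuffInit (FG : FactorGraph V 𝒥) (q : V → ℝ) (x : V → Bool) : Prop :=
  ∀ v : V, (x v = false → 1 - FG.eps v < q v) ∧ (x v = true → q v < FG.eps v)

/-- **Induction step for marginals**: if `x*` is a valid solution, the priors
satisfy the sufficient initialization for `x*`, and at some iteration `n` the
variable-to-factor messages satisfy `m^{(n)}_{v→J}(x*_v) > m^{(n)}_{v→J}(1 - x*_v)`
for every `v ∈ V` and `J ∈ 𝒥_v`, then the marginals at iteration `n + 1` satisfy
`r^{(n+1)}_v(x*_v) > r^{(n+1)}_v(1 - x*_v)` for every `v ∈ V`. -/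
theorem bp_marginal_induction_step
    {V 𝒥 : Type} [Fintype V] [DecidableEq V] [Fintype 𝒥] [DecidableEq 𝒥]
    (FG : FactorGraph V 𝒥) (q : V → ℝ) (R : BPRun FG q)
    (xstar : V → Bool) (hvalid : FG.ValidSolution xstar)
    (hinit : SuffInit FG q xstar) (n : ℕ)
    (hmsg : ∀ v : V, ∀ J : 𝒥, v ∈ FG.nbhd J →
      R.mVF n v J (xstar v) > R.mVF n v J (!xstar v)) :
    ∀ v : V,
      marginal FG R (n + 1) v (xstar v) > marginal FG R (n + 1) v (!xstar v) := by
  intro v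
  have hmemJ : ∀ J : 𝒥, J ∈ FG.Jset v ↔ v ∈ FG.nbhd J := by
    intro J; simp [FactorGraph.Jset]
  -- κ_v ≥ 1
  obtain ⟨J0, hJ0⟩ := FG.facs_nonempty v
  have hκ1 : 1 ≤ FG.kappa v := by
    have h1 : 1 ≤ ((univ : Finset ({y // y ∈ FG.nbhd J0} → Bool)).filter
        fun z => FG.g J0 z = true).card := by
      refine Finset.card_pos.mpr ⟨FG.restrict xstar J0, ?_⟩
      simp [hvalid J0]
    exact le_trans h1 (Finset.le_sup (f := fun J : 𝒥 =>
      ((univ : Finset ({y // y ∈ FG.nbhd J} → Bool)).filter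
        fun z => FG.g J z = true).card) ((hmemJ J0).mpr hJ0))
  -- key per-factor facts
  have key : ∀ J : 𝒥, ∀ hv : v ∈ FG.nbhd J,
      0 < R.mFV (n + 1) J v (xstar v) ∧
      R.mFV (n + 1) J v (!xstar v) ≤ (FG.kappa v : ℝ) * R.mFV (n + 1) J v (xstar v) := by
    intro J hv
    have hJmem : J ∈ FG.Jset v := (hmemJ J).mpr hv
    set Tstar : ℝ := ∏ y ∈ ((FG.nbhd J).erase v).attach, R.mVF n y.1 J (xstar y.1)
      with hTdef
    have hTpos : 0 < Tstar := by
      refine Finset.prod_pos fun y _ => ?_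
      exact lt_of_le_of_lt
        (R.mVF_mem n y.1 J (!(xstar y.1)) (Finset.mem_of_mem_erase y.2)).1
        (hmsg y.1 J (Finset.mem_of_mem_erase y.2))
    have hle : ∀ (w : V), w ∈ FG.nbhd J → ∀ b : Bool,
        R.mVF n w J b ≤ R.mVF n w J (xstar w) := by
      intro w hw b
      by_cases hb : b = xstar w
      · subst hb; exact le_rfl
      · have hb' : b = !xstar w := by
          cases b <;> cases h : xstar w <;> simp_all
        rw [hb']; exact (hmsg w J hw).le
    -- S(x*) ≥ Tstar
    have hnonneg : ∀ z : {y // y ∈ FG.nbhd J} → Bool, ∀ x : Bool,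
        (0:ℝ) ≤ (if z ⟨v, hv⟩ = x ∧ FG.g J z = true then
          ∏ y ∈ ((FG.nbhd J).erase v).attach,
            R.mVF n y.1 J (z ⟨y.1, Finset.mem_of_mem_erase y.2⟩)
        else 0) := by
      intro z x
      split_ifs
      · exact Finset.prod_nonneg fun y _ =>
          (R.mVF_mem n y.1 J _ (Finset.mem_of_mem_erase y.2)).1
      · exact le_rfl
    have hSx : Tstar ≤ ∑ z : {y // y ∈ FG.nbhd J} → Bool,
        (if z ⟨v, hv⟩ = xstar v ∧ FG.g J z = true then
          ∏ y ∈ ((FG.nbhd J).erase v).attach,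
            R.mVF n y.1 J (z ⟨y.1, Finset.mem_of_mem_erase y.2⟩)
        else 0) := by
      have hsingle := Finset.single_le_sum
        (f := fun z : {y // y ∈ FG.nbhd J} → Bool =>
          (if z ⟨v, hv⟩ = xstar v ∧ FG.g J z = true then
            ∏ y ∈ ((FG.nbhd J).erase v).attach,
              R.mVF n y.1 J (z ⟨y.1, Finset.mem_of_mem_erase y.2⟩)
          else 0))
        (fun z _ => hnonneg z (xstar v)) (Finset.mem_univ (FG.restrict xstar J))
      rw [hTdef]
      simpa [FactorGraph.restrict, hvalid J] using hsingle
    -- S(!x*) ≤ κ * Tstar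
    have hSnx : (∑ z : {y // y ∈ FG.nbhd J} → Bool,
        (if z ⟨v, hv⟩ = !xstar v ∧ FG.g J z = true then
          ∏ y ∈ ((FG.nbhd J).erase v).attach,
            R.mVF n y.1 J (z ⟨y.1, Finset.mem_of_mem_erase y.2⟩)
        else 0)) ≤ (FG.kappa v : ℝ) * Tstar := by
      have step1 : (∑ z : {y // y ∈ FG.nbhd J} → Bool,
          (if z ⟨v, hv⟩ = !xstar v ∧ FG.g J z = true then
            ∏ y ∈ ((FG.nbhd J).erase v).attach,
              R.mVF n y.1 J (z ⟨y.1, Finset.mem_of_mem_erase y.2⟩)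
          else 0)) ≤ ∑ z : {y // y ∈ FG.nbhd J} → Bool,
            (if FG.g J z = true then Tstar else 0) := by
        refine Finset.sum_le_sum fun z _ => ?_
        by_cases h : z ⟨v, hv⟩ = !xstar v ∧ FG.g J z = true
        · rw [if_pos h, if_pos h.2]
          exact Finset.prod_le_prod
            (fun y _ => (R.mVF_mem n y.1 J _ (Finset.mem_of_mem_erase y.2)).1)
            (fun y _ => hle y.1 (Finset.mem_of_mem_erase y.2) _)
        · rw [if_neg h]
          split_ifs
          · exact hTpos.le
          · exact le_rfl
      have step2 : (∑ z : {y // y ∈ FG.nbhd J} → Bool,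
          (if FG.g J z = true then Tstar else 0)) =
          (((univ : Finset ({y // y ∈ FG.nbhd J} → Bool)).filter
            fun z => FG.g J z = true).card : ℝ) * Tstar := by
        rw [← Finset.sum_filter, Finset.sum_const, nsmul_eq_mul]
      have hcard : (((univ : Finset ({y // y ∈ FG.nbhd J} → Bool)).filter
          fun z => FG.g J z = true).card : ℝ) ≤ (FG.kappa v : ℝ) :=
        Nat.cast_le.mpr (Finset.le_sup (f := fun J : 𝒥 =>
          ((univ : Finset ({y // y ∈ FG.nbhd J} → Bool)).filter
            fun z => FG.g J z = true).card) hJmem)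
      calc _ ≤ _ := step1
        _ = _ := step2
        _ ≤ (FG.kappa v : ℝ) * Tstar := mul_le_mul_of_nonneg_right hcard hTpos.le
    have hC := R.CFV_pos (n + 1) J v hv
    have e0 := R.mFV_eq n J v hv (xstar v)
    have e1 := R.mFV_eq n J v hv (!xstar v)
    constructor
    · rw [e0]
      exact lt_of_lt_of_le (mul_pos hC hTpos) (mul_le_mul_of_nonneg_left hSx hC.le)
    · rw [e0, e1]
      calc R.CFV (n+1) J v * _ ≤ R.CFV (n+1) J v * ((FG.kappa v : ℝ) * Tstar) :=
            mul_le_mul_of_nonneg_left hSnx hC.le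
        _ ≤ R.CFV (n+1) J v * ((FG.kappa v : ℝ) *
            ∑ z : {y // y ∈ FG.nbhd J} → Bool,
              (if z ⟨v, hv⟩ = xstar v ∧ FG.g J z = true then
                ∏ y ∈ ((FG.nbhd J).erase v).attach,
                  R.mVF n y.1 J (z ⟨y.1, Finset.mem_of_mem_erase y.2⟩)
              else 0)) := by
            refine mul_le_mul_of_nonneg_left ?_ hC.le
            exact mul_le_mul_of_nonneg_left hSx (Nat.cast_nonneg _)
        _ = (FG.kappa v : ℝ) * (R.CFV (n+1) J v * _) := by ring
  -- global product facts
  set m := (FG.Jset v).card with hmdef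
  set Pi : ℝ := ∏ J ∈ FG.Jset v, R.mFV (n + 1) J v (xstar v) with hPidef
  have hPipos : 0 < Pi :=
    Finset.prod_pos fun J hJ => (key J ((hmemJ J).mp hJ)).1
  have hprod : (∏ J ∈ FG.Jset v, R.mFV (n + 1) J v (!xstar v)) ≤
      (FG.kappa v : ℝ) ^ m * Pi := by
    calc (∏ J ∈ FG.Jset v, R.mFV (n + 1) J v (!xstar v))
        ≤ ∏ J ∈ FG.Jset v, ((FG.kappa v : ℝ) * R.mFV (n + 1) J v (xstar v)) :=
          Finset.prod_le_prod
            (fun J hJ => (R.mFV_mem (n+1) J v _ ((hmemJ J).mp hJ)).1)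
            (fun J hJ => (key J ((hmemJ J).mp hJ)).2)
      _ = (FG.kappa v : ℝ) ^ m * Pi := by
          rw [Finset.prod_mul_distrib, Finset.prod_const, hPidef, hmdef]
  -- prior facts
  have hq := R.q_mem v
  have hPx : 1 - FG.eps v < prior q v (xstar v) := by
    cases hx : xstar v with
    | false => simpa [prior, hx] using (hinit v).1 hx
    | true =>
      have := (hinit v).2 hx
      simp only [prior, hx, if_true]
      linarith
  have hPnx : prior q v (!xstar v) < FG.eps v := by
    cases hx : xstar v with
    | false =>
      have := (hinit v).1 hx
      simp only [hx, Bool.not_false, prior, if_true]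
      linarith
    | true =>
      have := (hinit v).2 hx
      simpa [prior, hx] using this
  have hPnx0 : 0 ≤ prior q v (!xstar v) := by
    cases hx : xstar v <;> simp [prior, hx] <;> linarith [hq.1, hq.2]
  -- ε relation
  have hκm : (1:ℝ) ≤ (FG.kappa v : ℝ) ^ m :=
    one_le_pow₀ (by exact_mod_cast hκ1 : (1:ℝ) ≤ (FG.kappa v : ℝ))
  have h1κ : (0:ℝ) < 1 + (FG.kappa v : ℝ) ^ m := by linarith
  have hεκ : 1 - FG.eps v = FG.eps v * (FG.kappa v : ℝ) ^ m := by
    rw [FactorGraph.eps, ← hmdef]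
    field_simp
    ring
  -- conclusion
  show marginal FG R (n+1) v (!xstar v) < marginal FG R (n+1) v (xstar v)
  unfold marginal
  rw [← hPidef]
  calc prior q v (!xstar v) * ∏ J ∈ FG.Jset v, R.mFV (n + 1) J v (!xstar v)
      ≤ prior q v (!xstar v) * ((FG.kappa v : ℝ) ^ m * Pi) :=
        mul_le_mul_of_nonneg_left hprod hPnx0
    _ ≤ FG.eps v * ((FG.kappa v : ℝ) ^ m * Pi) := by
        refine mul_le_mul_of_nonneg_right hPnx.le ?_
        positivity
    _ = (1 - FG.eps v) * Pi := by rw [hεκ]; ring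
    _ < prior q v (xstar v) * Pi := mul_lt_mul_of_pos_right hPx hPipos
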